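/- Let H be a real inner product space, let a, b, c, d ∈ H with ⟨c, d⟩ = 0, and let α, β, γ ∈ ℝ. With c₁ = 1, c₂ = 1 + α², c₃ = γ², c₄ = 9 + β², c₅ = 2αγ, c₆ = 2(3 + αβ), one has the inequality c₁|a|² + c₂|b|² + c₃|d|² + c₄|c|² + ⟨c₅ d + c₆ c, b⟩ ≥ 2⟨a, b + 3c⟩, with equality if and only if a = b + 3c and αb + βc + γd = 0. -/
import Mathlib


open scoped RealInnerProductSpace

/-- Pointwise form of the topological energy bound for the gauged Skyrme energy:
with `a = ⋆_M d^Aφ`, `b = φ*^AΣ`, `c = φ*^Aμ♯`, `d = φ*^Aν` and the BPS coefficients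
`c₁ = 1`, `c₂ = 1 + α²`, `c₃ = γ²`, `c₄ = 9 + β²`, `c₅ = 2αγ`, `c₆ = 2(3 + αβ)`,
the energy density dominates (six times) the topological charge density `2⟪a, b + 3c⟫`,
with equality precisely when the BPS equations `a = b + 3c` and `αb + βc + γd = 0` hold. -/
theorem gauged_skyrme_energy_bound {H : Type*} [NormedAddCommGroup H]
    [InnerProductSpace ℝ H] (a b c d : H) (hcd : ⟪c, d⟫ = 0) (α β γ : ℝ) :
    1 * ‖a‖ ^ 2 + (1 + α ^ 2) * ‖b‖ ^ 2 + γ ^ 2 * ‖d‖ ^ 2 + (9 + β ^ 2) * ‖c‖ ^ 2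
        + ⟪(2 * α * γ) • d + (2 * (3 + α * β)) • c, b⟫
      ≥ 2 * ⟪a, b + (3 : ℝ) • c⟫ ∧
    (1 * ‖a‖ ^ 2 + (1 + α ^ 2) * ‖b‖ ^ 2 + γ ^ 2 * ‖d‖ ^ 2 + (9 + β ^ 2) * ‖c‖ ^ 2
        + ⟪(2 * α * γ) • d + (2 * (3 + α * β)) • c, b⟫
      = 2 * ⟪a, b + (3 : ℝ) • c⟫ ↔
        (a = b + (3 : ℝ) • c ∧ α • b + β • c + γ • d = 0)) := by

  have hdc : ⟪d, c⟫ = 0 := by rw [real_inner_comm]; exact hcd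
  have key : 1 * ‖a‖ ^ 2 + (1 + α ^ 2) * ‖b‖ ^ 2 + γ ^ 2 * ‖d‖ ^ 2 + (9 + β ^ 2) * ‖c‖ ^ 2
        + ⟪(2 * α * γ) • d + (2 * (3 + α * β)) • c, b⟫
      - 2 * ⟪a, b + (3 : ℝ) • c⟫
      = ‖a - (b + (3 : ℝ) • c)‖ ^ 2 + ‖α • b + β • c + γ • d‖ ^ 2 := by
    rw [← real_inner_self_eq_norm_sq a, ← real_inner_self_eq_norm_sq b,
      ← real_inner_self_eq_norm_sq c, ← real_inner_self_eq_norm_sq d,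
      ← real_inner_self_eq_norm_sq, ← real_inner_self_eq_norm_sq]
    simp only [inner_sub_left, inner_sub_right, inner_add_left, inner_add_right,
      real_inner_smul_left, real_inner_smul_right, hcd, hdc,
      real_inner_comm b a, real_inner_comm c a, real_inner_comm c b, real_inner_comm d b]
    ring
  constructor
  · nlinarith [sq_nonneg ‖a - (b + (3 : ℝ) • c)‖, sq_nonneg ‖α • b + β • c + γ • d‖]
  · constructor
    · intro h
      have h0 : ‖a - (b + (3 : ℝ) • c)‖ ^ 2 + ‖α • b + β • c + γ • d‖ ^ 2 = 0 := by
        rw [← key]; linarith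
      have h1 : ‖a - (b + (3 : ℝ) • c)‖ = 0 ∧ ‖α • b + β • c + γ • d‖ = 0 := by
        constructor <;> nlinarith [sq_nonneg ‖a - (b + (3 : ℝ) • c)‖,
          sq_nonneg ‖α • b + β • c + γ • d‖, norm_nonneg (a - (b + (3 : ℝ) • c)),
          norm_nonneg (α • b + β • c + γ • d)]
      exact ⟨sub_eq_zero.mp (norm_eq_zero.mp h1.1), norm_eq_zero.mp h1.2⟩
    · rintro ⟨h1, h2⟩
      subst h1
      rw [h2, norm_zero, sub_self, norm_zero] at key
      simp only [one_mul] at key ⊢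
      linarith
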